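/- Let T be a Cartesian tree on m nodes whose left subtree has k-1 nodes and right subtree has m-k nodes. Then |ng(T)| = |ng(left(T))| + |ng(right(T))| + |ng(T, k-1)| + |ng(T, k)|, where the union defining ng(T) over swap positions is disjoint. -/

import Mathlib

/-- Binary tree shapes (Cartesian trees are determined by their shape). -/
inductive BTree : Type
  | nil : BTree
  | node : BTree → BTree → BTree
deriving DecidableEq

namespace BTree

/-- Number of nodes. -/
def size : BTree → ℕ
  | nil => 0
  | node l r => size l + size r + 1

/-- Length of the leftmost path. -/
def LMP : BTree → ℕ
  | nil => 0
  | node l _ => LMP l + 1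

/-- Length of the rightmost path. -/
def RMP : BTree → ℕ
  | nil => 0
  | node _ r => RMP r + 1

end BTree

/-- Minimum value of a list (0 for the empty list). -/
def listMin : List ℤ → ℤ
  | [] => 0
  | a :: t => t.foldl min a

/-- Index (0-based) of the minimum of a list. -/
def minIdx (l : List ℤ) : ℕ := l.idxOf (listMin l)

/-- Cartesian tree of a list, with fuel for termination. -/
def ctreeAux : ℕ → List ℤ → BTree
  | 0, _ => .nil
  | _ + 1, [] => .nil
  | n + 1, a :: t =>
      let g := minIdx (a :: t)
      .node (ctreeAux n ((a :: t).take g)) (ctreeAux n ((a :: t).drop (g + 1)))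

/-- Cartesian tree of a list: the root is the position of the minimum,
its subtrees are the Cartesian trees of the prefix and suffix around it. -/
def ctreeL (l : List ℤ) : BTree := ctreeAux l.length l

/-- The factor x[a..b] (1-based positions) of a sequence, as a list. -/
def seqList (x : ℕ → ℤ) (a b : ℕ) : List ℤ :=
  (List.range (b + 1 - a)).map (fun k => x (a + k))

/-- Cartesian tree of the sequence x[1..m]. -/
def ctreeOf (m : ℕ) (x : ℕ → ℤ) : BTree := ctreeL (seqList x 1 m)

/-- Positions j < h (1-based) with x[j] < x[h]. -/
def PDset (x : ℕ → ℤ) (h : ℕ) : Finset ℕ :=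
  (Finset.Ico 1 h).filter (fun j => x j < x h)

/-- Parent-distance table: PD_x[h] = h - max{j < h : x[j] < x[h]}, 0 if no such j. -/
def PD (x : ℕ → ℤ) (h : ℕ) : ℕ :=
  if hs : (PDset x h).Nonempty then h - (PDset x h).max' hs else 0

/-- Positions h < j ≤ m with x[j] < x[h]. -/
def RPDset (m : ℕ) (x : ℕ → ℤ) (h : ℕ) : Finset ℕ :=
  (Finset.Ioc h m).filter (fun j => x j < x h)

/-- Reverse parent-distance table: RPD_x[h] = min{j > h : x[j] < x[h]} - h, 0 if no such j. -/
def RPD (m : ℕ) (x : ℕ → ℤ) (h : ℕ) : ℕ :=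
  if hs : (RPDset m x h).Nonempty then (RPDset m x h).min' hs - h else 0

/-- Referent of h: the smallest position j > h with x[j] < x[h], or -1 if none. -/
def refD (m : ℕ) (x : ℕ → ℤ) (h : ℕ) : ℤ :=
  if hs : (RPDset m x h).Nonempty then ((RPDset m x h).min' hs : ℤ) else -1

/-- Skipped-number table: SN_x[h] is the number of nodes on the rightmost path of the
left subtree of node h in C(x), i.e. the number of positions whose referent is h. -/
def SN (m : ℕ) (x : ℕ → ℤ) (h : ℕ) : ℕ :=
  ((Finset.Ico 1 h).filter (fun j => refD m x j = (h : ℤ))).card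

/-- The swap τ(x,i): exchange the entries at positions i and i+1. -/
def swapAt (x : ℕ → ℤ) (i : ℕ) : ℕ → ℤ :=
  fun j => if j = i then x (i + 1) else if j = i + 1 then x i else x j

/-- ng(T,i): the Cartesian trees obtained from a sequence realizing T by one swap
at position i (valid positions are 1 ≤ i ≤ m-1). -/
def ngi (m : ℕ) (T : BTree) (i : ℕ) : Set BTree :=
  { S | 1 ≤ i ∧ i + 1 ≤ m ∧ ∃ x : ℕ → ℤ, Set.InjOn x (Set.Icc 1 m) ∧
        ctreeOf m x = T ∧ S = ctreeOf m (swapAt x i) }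

/-- ng(T): the swap neighbourhood of T. -/
def ng (m : ℕ) (T : BTree) : Set BTree := ⋃ i, ngi m T i

/-- Number of permutations of {1,...,n} whose Cartesian tree is A. -/
noncomputable def permCount (n : ℕ) (A : BTree) : ℕ :=
  Set.ncard { σ : Equiv.Perm (Fin n) |
    ctreeL (List.ofFn (fun k : Fin n => ((σ k : ℕ) : ℤ) + 1)) = A }

/-- Product over all nodes t of A of the size of the subtree rooted at t. -/
def hookProd : BTree → ℕ
  | .nil => 1
  | .node l r => (BTree.node l r).size * hookProd l * hookProd r


namespace SwapProof

lemma foldl_min_le_init (t : List ℤ) (a : ℤ) : t.foldl min a ≤ a := by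
  induction t generalizing a with
  | nil => simp
  | cons b t ih => exact le_trans (ih _) (min_le_left _ _)

lemma foldl_min_le_mem (t : List ℤ) (a : ℤ) {b} (hb : b ∈ t) : t.foldl min a ≤ b := by
  induction t generalizing a with
  | nil => cases hb
  | cons c t ih =>
    simp only [List.foldl_cons]
    rcases List.mem_cons.mp hb with h | h
    · subst h; exact le_trans (foldl_min_le_init _ _) (min_le_right _ _)
    · exact ih _ h

lemma foldl_min_mem (t : List ℤ) (a : ℤ) : t.foldl min a ∈ a :: t := by
  induction t generalizing a with
  | nil => simp
  | cons b t ih =>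
    simp only [List.foldl_cons]
    rcases List.mem_cons.mp (ih (min a b)) with h | h
    · rcases min_choice a b with h' | h' <;> rw [h, h']
      · exact List.mem_cons_self
      · exact List.mem_cons_of_mem _ List.mem_cons_self
    · exact List.mem_cons_of_mem _ (List.mem_cons_of_mem _ h)

lemma listMin_le {l : List ℤ} {a : ℤ} (h : a ∈ l) : listMin l ≤ a := by
  cases l with
  | nil => cases h
  | cons b t =>
    rcases List.mem_cons.mp h with h | h
    · subst h; exact foldl_min_le_init _ _
    · exact foldl_min_le_mem _ _ h

lemma listMin_mem {l : List ℤ} (h : l ≠ []) : listMin l ∈ l := by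
  cases l with
  | nil => exact absurd rfl h
  | cons b t => exact foldl_min_mem _ _

lemma minIdx_lt_length {l : List ℤ} (h : l ≠ []) : minIdx l < l.length :=
  List.idxOf_lt_length_iff.mpr (listMin_mem h)

lemma getElem_minIdx {l : List ℤ} (h : l ≠ []) :
    l[minIdx l]'(minIdx_lt_length h) = listMin l :=
  List.getElem_idxOf _

lemma ctreeAux_congr : ∀ n m : ℕ, ∀ l : List ℤ, l.length ≤ n → l.length ≤ m →
    ctreeAux n l = ctreeAux m l := by
  intro n
  induction n with
  | zero =>
    intro m l hn _
    have : l = [] := List.length_eq_zero_iff.mp (Nat.le_zero.mp hn)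
    subst this
    cases m <;> rfl
  | succ n ih =>
    intro m l hn hm
    cases l with
    | nil => cases m <;> rfl
    | cons a t =>
      cases m with
      | zero => simp at hm
      | succ m =>
        have hne : (a :: t) ≠ [] := by simp
        have hg := minIdx_lt_length hne
        simp only [ctreeAux]
        have h1 : ((a :: t).take (minIdx (a :: t))).length ≤ n := by
          simp only [List.length_take]
          simp only [List.length_cons] at hg hn ⊢
          omega
        have h1' : ((a :: t).take (minIdx (a :: t))).length ≤ m := by
          simp only [List.length_take]
          simp only [List.length_cons] at hg hm ⊢
          omega
        have h2 : ((a :: t).drop (minIdx (a :: t) + 1)).length ≤ n := by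
          simp only [List.length_drop]
          simp only [List.length_cons] at hn ⊢
          omega
        have h2' : ((a :: t).drop (minIdx (a :: t) + 1)).length ≤ m := by
          simp only [List.length_drop]
          simp only [List.length_cons] at hm ⊢
          omega
        rw [ih m _ h1 h1', ih m _ h2 h2']

lemma ctreeL_decomp {l : List ℤ} (h : l ≠ []) :
    ctreeL l = .node (ctreeL (l.take (minIdx l))) (ctreeL (l.drop (minIdx l + 1))) := by
  cases l with
  | nil => exact absurd rfl h
  | cons a t =>
    show ctreeAux (t.length + 1) (a :: t) = _
    simp only [ctreeAux]
    have hg := minIdx_lt_length h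
    rw [ctreeAux_congr t.length _ _ (by simp only [List.length_take, List.length_cons] at hg ⊢; omega) le_rfl,
        ctreeAux_congr t.length _ _ (by simp only [List.length_drop, List.length_cons]; omega) le_rfl]
    rfl

lemma ctreeAux_eq_ctreeL {n : ℕ} {l : List ℤ} (h : l.length ≤ n) : ctreeAux n l = ctreeL l :=
  ctreeAux_congr n l.length l h le_rfl

lemma size_ctreeL : ∀ n : ℕ, ∀ l : List ℤ, l.length ≤ n → (ctreeL l).size = l.length := by
  intro n
  induction n with
  | zero =>
    intro l hn
    have : l = [] := List.length_eq_zero_iff.mp (Nat.le_zero.mp hn)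
    subst this; rfl
  | succ n ih =>
    intro l hn
    cases l with
    | nil => rfl
    | cons a t =>
      have hne : (a :: t) ≠ [] := by simp
      have hg := minIdx_lt_length hne
      rw [ctreeL_decomp hne]
      have h1 : ((a :: t).take (minIdx (a :: t))).length ≤ n := by
        simp only [List.length_take]; simp only [List.length_cons] at hg hn ⊢; omega
      have h2 : ((a :: t).drop (minIdx (a :: t) + 1)).length ≤ n := by
        simp only [List.length_drop]; simp only [List.length_cons] at hn ⊢; omega
      show BTree.size _ = _
      simp only [BTree.size, ih _ h1, ih _ h2, List.length_take, List.length_drop]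
      simp only [List.length_cons] at hg ⊢
      omega

lemma size_ctreeL' (l : List ℤ) : (ctreeL l).size = l.length := size_ctreeL l.length l le_rfl

/-- Composition: if `v` is strictly below everything in `l1` and `l2`, the Cartesian
tree of `l1 ++ v :: l2` is the node with subtrees the Cartesian trees of `l1`, `l2`. -/
lemma ctreeL_append {l1 l2 : List ℤ} {v : ℤ}
    (h1 : ∀ a ∈ l1, v < a) (h2 : ∀ a ∈ l2, v < a) :
    ctreeL (l1 ++ v :: l2) = .node (ctreeL l1) (ctreeL l2) := by
  set l := l1 ++ v :: l2 with hl
  have hne : l ≠ [] := by simp [hl]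
  have hvmem : v ∈ l := by simp [hl]
  have hmin : listMin l = v := by
    have h1' := listMin_le hvmem
    rcases List.mem_append.mp (listMin_mem hne) with h | h
    · exact absurd h1' (not_le.mpr (h1 _ h))
    · rcases List.mem_cons.mp h with h | h
      · exact h
      · exact absurd h1' (not_le.mpr (h2 _ h))
  have hvl1 : v ∉ l1 := fun hv => lt_irrefl v (h1 v hv)
  have hidx : minIdx l = l1.length := by
    rw [minIdx, hmin, hl, List.idxOf_append_of_notMem hvl1]
    simp [List.idxOf_cons_self]
  rw [ctreeL_decomp hne, hidx]
  congr 1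
  · congr 1
    rw [hl, List.take_left' rfl]
  · congr 1
    have : l = (l1 ++ [v]) ++ l2 := by simp [hl]
    rw [this, List.drop_left' (by simp)]

lemma foldl_min_map {f : ℤ → ℤ} (hf : StrictMono f) :
    ∀ (t : List ℤ) (a : ℤ), (t.map f).foldl min (f a) = f (t.foldl min a) := by
  intro t
  induction t with
  | nil => intro a; rfl
  | cons b t ih =>
    intro a
    simp only [List.map_cons, List.foldl_cons, ← hf.monotone.map_min, ih]

lemma listMin_map {f : ℤ → ℤ} (hf : StrictMono f) {l : List ℤ} (h : l ≠ []) :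
    listMin (l.map f) = f (listMin l) := by
  cases l with
  | nil => exact absurd rfl h
  | cons a t => exact foldl_min_map hf t a

lemma indexOf_map {f : ℤ → ℤ} (hf : Function.Injective f) (l : List ℤ) (a : ℤ) :
    (l.map f).idxOf (f a) = l.idxOf a := by
  induction l with
  | nil => rfl
  | cons b t ih =>
    simp only [List.map_cons, List.idxOf_cons, ih]
    by_cases h : a = b
    · subst h; simp
    · rw [beq_false_of_ne (fun he => h (hf he).symm), beq_false_of_ne (fun he => h he.symm)]

lemma minIdx_map {f : ℤ → ℤ} (hf : StrictMono f) {l : List ℤ} (h : l ≠ []) :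
    minIdx (l.map f) = minIdx l := by
  rw [minIdx, minIdx, listMin_map hf h, indexOf_map hf.injective]

lemma ctreeL_map {f : ℤ → ℤ} (hf : StrictMono f) : ∀ n : ℕ, ∀ l : List ℤ, l.length ≤ n →
    ctreeL (l.map f) = ctreeL l := by
  intro n
  induction n with
  | zero =>
    intro l hn
    have : l = [] := List.length_eq_zero_iff.mp (Nat.le_zero.mp hn)
    subst this; rfl
  | succ n ih =>
    intro l hn
    cases l with
    | nil => rfl
    | cons a t =>
      have hne : (a :: t) ≠ [] := by simp
      have hne' : ((a :: t).map f) ≠ [] := by simp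
      have hg := minIdx_lt_length hne
      rw [ctreeL_decomp hne, ctreeL_decomp hne', minIdx_map hf hne,
        ← List.map_take, ← List.map_drop]
      have h1 : ((a :: t).take (minIdx (a :: t))).length ≤ n := by
        simp only [List.length_take]; simp only [List.length_cons] at hg hn ⊢; omega
      have h2 : ((a :: t).drop (minIdx (a :: t) + 1)).length ≤ n := by
        simp only [List.length_drop]; simp only [List.length_cons] at hn ⊢; omega
      rw [ih _ h1, ih _ h2]

lemma ctreeL_map' {f : ℤ → ℤ} (hf : StrictMono f) (l : List ℤ) :
    ctreeL (l.map f) = ctreeL l := ctreeL_map hf l.length l le_rfl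

end SwapProof

namespace SwapProof

lemma seqList_length (x : ℕ → ℤ) (a b : ℕ) : (seqList x a b).length = b + 1 - a := by
  simp [seqList]

lemma seqList_getElem (x : ℕ → ℤ) (a b t : ℕ) (ht : t < b + 1 - a) :
    (seqList x a b)[t]'(by rw [seqList_length]; exact ht) = x (a + t) := by
  simp [seqList]

lemma seqList_getD {x : ℕ → ℤ} {m r : ℕ} (h1 : 1 ≤ r) (h2 : r ≤ m) :
    (seqList x 1 m).getD (r - 1) 0 = x r := by
  rw [List.getD_eq_getElem _ _ (by rw [seqList_length]; omega), seqList_getElem x 1 m _ (by omega)]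
  congr 1; omega

lemma seqList_congr {x y : ℕ → ℤ} {a b : ℕ} (h : ∀ j, a ≤ j → j ≤ b → x j = y j) :
    seqList x a b = seqList y a b := by
  simp only [seqList]
  apply List.map_congr_left
  intro t ht
  rw [List.mem_range] at ht
  exact h _ (by omega) (by omega)

lemma seqList_map (f : ℤ → ℤ) (x : ℕ → ℤ) (a b : ℕ) :
    seqList (fun j => f (x j)) a b = (seqList x a b).map f := by
  simp [seqList, List.map_map]

lemma mem_seqList {x : ℕ → ℤ} {a b : ℕ} {c : ℤ} :
    c ∈ seqList x a b ↔ ∃ k, k < b + 1 - a ∧ c = x (a + k) := by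
  simp [seqList, eq_comm]

lemma seqList_split {x : ℕ → ℤ} {m k : ℕ} (h1 : 1 ≤ k) (h2 : k ≤ m) :
    seqList x 1 m = seqList x 1 (k - 1) ++ x k :: seqList (fun j => x (j + k)) 1 (m - k) := by
  have hm : m + 1 - 1 = (k - 1) + (m - k + 1) := by omega
  have h3 : (k - 1) + 1 - 1 = k - 1 := by omega
  have h4 : (m - k) + 1 - 1 = m - k := by omega
  simp only [seqList, hm, h3, h4]
  rw [List.range_add, List.map_append, List.map_map, List.range_succ_eq_map,
    List.map_cons, List.map_map]
  congr 1
  congr 1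
  · show x (1 + (k - 1 + 0)) = x k
    congr 1; omega
  · apply List.map_congr_left; intro t ht
    show x (1 + (k - 1 + Nat.succ t)) = x (1 + t + k)
    congr 1; omega

lemma size_ctreeOf (m : ℕ) (x : ℕ → ℤ) : (ctreeOf m x).size = m := by
  rw [ctreeOf, size_ctreeL', seqList_length]; omega

lemma nodup_seqList {x : ℕ → ℤ} {m : ℕ} (hinj : Set.InjOn x (Set.Icc 1 m)) :
    (seqList x 1 m).Nodup := by
  simp only [seqList]
  apply List.Nodup.map_on
  · intro a ha b hb hab
    rw [List.mem_range] at ha hb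
    have := hinj (by simp [Set.mem_Icc]; omega) (by simp [Set.mem_Icc]; omega) hab
    omega
  · exact List.nodup_range
end SwapProof

namespace SwapProof

/-- C2: composition at sequence level. -/
lemma ctreeOf_eq_node {m k : ℕ} {x : ℕ → ℤ} (h1 : 1 ≤ k) (h2 : k ≤ m)
    (hmin : ∀ j, 1 ≤ j → j ≤ m → j ≠ k → x k < x j) :
    ctreeOf m x = .node (ctreeOf (k - 1) x) (ctreeOf (m - k) (fun j => x (j + k))) := by
  rw [ctreeOf, seqList_split h1 h2, ctreeL_append]
  · rfl
  · intro a ha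
    rcases mem_seqList.mp ha with ⟨t, ht, rfl⟩
    exact hmin _ (by omega) (by omega) (by omega)
  · intro a ha
    rcases mem_seqList.mp ha with ⟨t, ht, rfl⟩
    exact hmin _ (by omega) (by omega) (by omega)

/-- C1: decomposition of a realized node. -/
lemma ctree_node_inv {m : ℕ} {x : ℕ → ℤ} {L R : BTree}
    (hinj : Set.InjOn x (Set.Icc 1 m)) (h : ctreeOf m x = .node L R) :
    L.size + 1 ≤ m ∧
    (∀ j, 1 ≤ j → j ≤ m → j ≠ L.size + 1 → x (L.size + 1) < x j) ∧
    ctreeOf L.size x = L ∧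
    ctreeOf (m - (L.size + 1)) (fun j => x (j + (L.size + 1))) = R := by
  have hm1 : 1 ≤ m := by
    by_contra hm
    have : m = 0 := by omega
    subst this
    have : seqList x 1 0 = [] := by
      rw [← List.length_eq_zero_iff, seqList_length]
    rw [ctreeOf, this] at h
    exact absurd h (by simp [ctreeL, ctreeAux])
  set l := seqList x 1 m with hl
  have hlen : l.length = m := by rw [hl, seqList_length]; omega
  have hne : l ≠ [] := by
    intro he; rw [he] at hlen; simp at hlen; omega
  have hdec := ctreeL_decomp hne
  rw [← ctreeOf, h] at hdec
  injection hdec with hLeq hReq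
  set g := minIdx l with hg
  have hglt : g < m := by rw [← hlen]; exact minIdx_lt_length hne
  have hLsize : L.size = g := by
    rw [hLeq, size_ctreeL', List.length_take]; omega
  set k := L.size + 1 with hk
  have hkg : g = k - 1 := by omega
  have hsplit := seqList_split (x := x) (m := m) (k := k) (by omega) (by omega)
  -- identify the take and drop
  have htake : l.take g = seqList x 1 (k - 1) := by
    rw [hl, hsplit, ← hkg, List.take_left' (by rw [seqList_length]; omega)]
  have hdrop : l.drop (g + 1) = seqList (fun j => x (j + k)) 1 (m - k) := by
    have : l = (seqList x 1 (k - 1) ++ [x k]) ++ seqList (fun j => x (j + k)) 1 (m - k) := by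
      rw [hl, hsplit]; simp
    rw [this, List.drop_left' (by rw [List.length_append, seqList_length]; simp; omega)]
  -- the min value
  have hxk : l.getD g 0 = x k := by
    have := seqList_getD (x := x) (m := m) (r := k) (by omega) (by omega)
    rw [← hl] at this
    rw [hkg]
    exact this
  have hmin : ∀ j, 1 ≤ j → j ≤ m → j ≠ k → x k < x j := by
    intro j hj1 hj2 hjk
    have hjmem : x j ∈ l := by
      rw [hl, mem_seqList]
      refine ⟨j - 1, by omega, ?_⟩
      have : 1 + (j - 1) = j := by omega
      rw [this]
    have hle : x k ≤ x j := by
      have : l.getD g 0 = listMin l := by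
        rw [List.getD_eq_getElem _ _ (by omega), getElem_minIdx hne]
      rw [← hxk, this]
      exact listMin_le hjmem
    rcases lt_or_eq_of_le hle with h' | h'
    · exact h'
    · exfalso
      exact hjk (hinj (by simp [Set.mem_Icc]; omega) (by simp [Set.mem_Icc]; omega) h').symm
  refine ⟨by omega, hmin, ?_, ?_⟩
  · rw [hLsize, hLeq, htake, ← hkg]; rfl
  · rw [hReq, hdrop]; rfl

lemma swapAt_self (x : ℕ → ℤ) (i : ℕ) : swapAt x i i = x (i + 1) := by simp [swapAt]

lemma swapAt_succ (x : ℕ → ℤ) (i : ℕ) : swapAt x i (i + 1) = x i := by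
  show (if i + 1 = i then x (i + 1) else if i + 1 = i + 1 then x i else x (i + 1)) = x i
  rw [if_neg (Nat.succ_ne_self i), if_pos rfl]

lemma swapAt_other (x : ℕ → ℤ) (i j : ℕ) (h1 : j ≠ i) (h2 : j ≠ i + 1) :
    swapAt x i j = x j := by
  simp only [swapAt]
  rw [if_neg h1, if_neg h2]

lemma swapAt_injOn {x : ℕ → ℤ} {m i : ℕ} (hinj : Set.InjOn x (Set.Icc 1 m))
    (h1 : 1 ≤ i) (h2 : i + 1 ≤ m) : Set.InjOn (swapAt x i) (Set.Icc 1 m) := by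
  intro a ha b hb hab
  simp only [Set.mem_Icc] at ha hb
  set ea := if a = i then i + 1 else if a = i + 1 then i else a with hea
  set eb := if b = i then i + 1 else if b = i + 1 then i else b with heb
  have hxa : swapAt x i a = x ea := by
    rw [hea]; simp only [swapAt]; split_ifs <;> rfl
  have hxb : swapAt x i b = x eb := by
    rw [heb]; simp only [swapAt]; split_ifs <;> rfl
  have hmema : ea ∈ Set.Icc 1 m := by
    rw [hea]; split_ifs <;> simp only [Set.mem_Icc] <;> omega
  have hmemb : eb ∈ Set.Icc 1 m := by
    rw [heb]; split_ifs <;> simp only [Set.mem_Icc] <;> omega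
  have heq : ea = eb := hinj hmema hmemb (by rw [← hxa, ← hxb]; exact hab)
  rw [hea, heb] at heq
  split_ifs at heq <;> omega

end SwapProof

namespace SwapProof

/-- In-order ancestry: `anc T p q` iff the node at in-order position `p` (1-based)
is an ancestor (or equal) of the node at in-order position `q`, for `p ≤ q`. -/
def anc : BTree → ℕ → ℕ → Prop
  | .nil, _, _ => False
  | .node L R, p, q =>
    if q ≤ L.size then anc L p q
    else if L.size + 2 ≤ p then anc R (p - L.size - 1) (q - L.size - 1)
    else p = L.size + 1

lemma anc_iff : ∀ n : ℕ, ∀ l : List ℤ, l.length ≤ n → l.Nodup →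
    ∀ p q : ℕ, 1 ≤ p → p ≤ q → q ≤ l.length →
    (anc (ctreeL l) p q ↔ ∀ r, p ≤ r → r ≤ q → l.getD (p - 1) 0 ≤ l.getD (r - 1) 0) := by
  intro n
  induction n with
  | zero =>
    intro l hn _ p q hp hpq hq
    have : l = [] := List.length_eq_zero_iff.mp (Nat.le_zero.mp hn)
    subst this; simp at hq; omega
  | succ n ih =>
    intro l hn hnd p q hp hpq hq
    have hne : l ≠ [] := by
      intro he; subst he; simp at hq; omega
    set g := minIdx l with hg
    have hglt : g < l.length := minIdx_lt_length hne
    set A := l.take g with hA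
    set B := l.drop (g + 1) with hB
    have hAlen : A.length = g := by rw [hA, List.length_take]; omega
    have hBlen : B.length = l.length - g - 1 := by rw [hB, List.length_drop]; omega
    have hAnd : A.Nodup := hnd.sublist (List.take_sublist _ _)
    have hBnd : B.Nodup := hnd.sublist (List.drop_sublist _ _)
    have hAget : ∀ j, j < g → A.getD j 0 = l.getD j 0 := by
      intro j hj
      rw [List.getD_eq_getElem _ _ (by omega), List.getD_eq_getElem _ _ (by omega)]
      exact List.getElem_take
    have hBget : ∀ j, j < l.length - g - 1 → B.getD j 0 = l.getD (g + 1 + j) 0 := by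
      intro j hj
      rw [List.getD_eq_getElem _ _ (by omega), List.getD_eq_getElem _ _ (by omega)]
      exact List.getElem_drop
    have hmin : l.getD g 0 = listMin l := by
      rw [List.getD_eq_getElem _ _ hglt]; exact getElem_minIdx hne
    have hminlt : ∀ j, j < l.length → j ≠ g → l.getD g 0 < l.getD j 0 := by
      intro j hj hjg
      have hle : l.getD g 0 ≤ l.getD j 0 := by
        rw [hmin]
        exact listMin_le (by rw [List.getD_eq_getElem _ _ hj]; exact l.getElem_mem _)
      rcases lt_or_eq_of_le hle with h' | h'
      · exact h'
      · exfalso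
        rw [List.getD_eq_getElem _ _ hglt, List.getD_eq_getElem _ _ hj] at h'
        exact hjg (hnd.getElem_inj_iff.mp h').symm
    have hdec : ctreeL l = .node (ctreeL A) (ctreeL B) := ctreeL_decomp hne
    have hsz : (ctreeL A).size = g := by rw [size_ctreeL', hAlen]
    rw [hdec]
    show (if q ≤ (ctreeL A).size then anc (ctreeL A) p q
      else if (ctreeL A).size + 2 ≤ p then
        anc (ctreeL B) (p - (ctreeL A).size - 1) (q - (ctreeL A).size - 1)
      else p = (ctreeL A).size + 1) ↔ _
    rw [hsz]
    by_cases hq1 : q ≤ g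
    · rw [if_pos hq1]
      rw [ih A (by omega) hAnd p q hp hpq (by omega)]
      constructor
      · intro h r hr1 hr2
        rw [← hAget _ (by omega), ← hAget _ (by omega)]
        exact h r hr1 hr2
      · intro h r hr1 hr2
        rw [hAget _ (by omega), hAget _ (by omega)]
        exact h r hr1 hr2
    · rw [if_neg hq1]
      by_cases hp1 : g + 2 ≤ p
      · rw [if_pos hp1]
        rw [ih B (by omega) hBnd (p - g - 1) (q - g - 1) (by omega) (by omega) (by omega)]
        constructor
        · intro h r hr1 hr2
          have := h (r - g - 1) (by omega) (by omega)
          rw [hBget _ (by omega), hBget _ (by omega)] at this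
          have e1 : g + 1 + (p - g - 1 - 1) = p - 1 := by omega
          have e2 : g + 1 + (r - g - 1 - 1) = r - 1 := by omega
          rwa [e1, e2] at this
        · intro h r hr1 hr2
          rw [hBget _ (by omega), hBget _ (by omega)]
          have e1 : g + 1 + (p - g - 1 - 1) = p - 1 := by omega
          have e2 : g + 1 + (r - 1) = r + g := by omega
          rw [e1, e2]
          have := h (r + g + 1) (by omega) (by omega)
          have e3 : r + g + 1 - 1 = r + g := by omega
          rwa [e3] at this
      · rw [if_neg hp1]
        constructor
        · intro h r hr1 hr2
          subst h
          have e1 : g + 1 - 1 = g := by omega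
          rw [e1]
          rcases eq_or_ne r (g + 1) with h' | h'
          · rw [h', e1]
          · exact le_of_lt (hminlt (r - 1) (by omega) (by omega))
        · intro h
          by_contra hpg
          have hple : p ≤ g := by omega
          have := h (g + 1) (by omega) (by omega)
          have e1 : g + 1 - 1 = g := by omega
          rw [e1] at this
          exact absurd this (not_le.mpr (hminlt (p - 1) (by omega) (by omega)))

lemma anc_iff' {l : List ℤ} (hnd : l.Nodup) {p q : ℕ} (hp : 1 ≤ p) (hpq : p ≤ q)
    (hq : q ≤ l.length) :
    anc (ctreeL l) p q ↔ ∀ r, p ≤ r → r ≤ q → l.getD (p - 1) 0 ≤ l.getD (r - 1) 0 :=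
  anc_iff l.length l le_rfl hnd p q hp hpq hq

/-- Ancestry between in-order neighbours. -/
lemma anc_succ_iff {x : ℕ → ℤ} {m i : ℕ} (hinj : Set.InjOn x (Set.Icc 1 m))
    (h1 : 1 ≤ i) (h2 : i + 1 ≤ m) :
    anc (ctreeOf m x) i (i + 1) ↔ x i < x (i + 1) := by
  have e1 : i + 1 - 1 = i := by omega
  have d1 : (seqList x 1 m).getD (i - 1) 0 = x i := seqList_getD h1 (by omega)
  have d2 : (seqList x 1 m).getD i 0 = x (i + 1) := by
    have := seqList_getD (x := x) (m := m) (r := i + 1) (by omega) h2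
    rwa [e1] at this
  rw [ctreeOf, anc_iff' (nodup_seqList hinj) h1 (by omega) (by rw [seqList_length]; omega)]
  constructor
  · intro h
    have := h (i + 1) (by omega) le_rfl
    rw [e1, d1, d2] at this
    rcases lt_or_eq_of_le this with h' | h'
    · exact h'
    · exact absurd (hinj (Set.mem_Icc.mpr ⟨by omega, by omega⟩)
        (Set.mem_Icc.mpr ⟨by omega, by omega⟩) h') (by omega)
  · intro h r hr1 hr2
    rcases eq_or_ne r i with h' | h'
    · subst h'; rfl
    · have hr : r = i + 1 := by omega
      subst hr
      rw [e1, d1, d2]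
      exact le_of_lt h

lemma anc_two_iff {x : ℕ → ℤ} {m i : ℕ} (hinj : Set.InjOn x (Set.Icc 1 m))
    (h1 : 1 ≤ i) (h2 : i + 2 ≤ m) :
    anc (ctreeOf m x) i (i + 2) ↔ x i < x (i + 1) ∧ x i < x (i + 2) := by
  have hne : ∀ a b : ℕ, 1 ≤ a → a ≤ m → 1 ≤ b → b ≤ m → a ≠ b → x a ≠ x b := by
    intro a b ha1 ha2 hb1 hb2 hab he
    exact hab (hinj (Set.mem_Icc.mpr ⟨ha1, ha2⟩) (Set.mem_Icc.mpr ⟨hb1, hb2⟩) he)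
  have e1 : i + 1 - 1 = i := by omega
  have e2 : i + 2 - 1 = i + 1 := by omega
  have d1 : (seqList x 1 m).getD (i - 1) 0 = x i := seqList_getD h1 (by omega)
  have d2 : (seqList x 1 m).getD i 0 = x (i + 1) := by
    have := seqList_getD (x := x) (m := m) (r := i + 1) (by omega) (by omega)
    rwa [e1] at this
  have d3 : (seqList x 1 m).getD (i + 1) 0 = x (i + 2) := by
    have := seqList_getD (x := x) (m := m) (r := i + 2) (by omega) (by omega)
    rwa [e2] at this
  rw [ctreeOf, anc_iff' (nodup_seqList hinj) h1 (by omega) (by rw [seqList_length]; omega)]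
  constructor
  · intro h
    have ha := h (i + 1) (by omega) (by omega)
    have hb := h (i + 2) (by omega) (by omega)
    rw [e1, d1, d2] at ha
    rw [e2, d1, d3] at hb
    exact ⟨lt_of_le_of_ne ha (hne i (i+1) (by omega) (by omega) (by omega) (by omega) (by omega)),
      lt_of_le_of_ne hb (hne i (i+2) (by omega) (by omega) (by omega) (by omega) (by omega))⟩
  · intro h r hr1 hr2
    rw [d1]
    rcases Nat.lt_or_ge r (i + 1) with h' | h'
    · have : r = i := by omega
      subst this
      rw [d1]
    · rcases Nat.lt_or_ge r (i + 2) with h'' | h''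
      · have : r = i + 1 := by omega
        subst this
        rw [e1, d2]
        exact le_of_lt h.1
      · have : r = i + 2 := by omega
        subst this
        rw [e2, d3]
        exact le_of_lt h.2

end SwapProof

namespace SwapProof

lemma injOn_ne {x : ℕ → ℤ} {m : ℕ} (hinj : Set.InjOn x (Set.Icc 1 m))
    {a b : ℕ} (ha1 : 1 ≤ a) (ha2 : a ≤ m) (hb1 : 1 ≤ b) (hb2 : b ≤ m) (hab : a ≠ b) :
    x a ≠ x b := fun he =>
  hab (hinj (Set.mem_Icc.mpr ⟨ha1, ha2⟩) (Set.mem_Icc.mpr ⟨hb1, hb2⟩) he)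

/-- Swaps at distinct positions yield distinct Cartesian trees. -/
lemma ngi_not_mem_both {m : ℕ} {T S : BTree} {i j : ℕ} (hij : i < j)
    (h1 : S ∈ ngi m T i) (h2 : S ∈ ngi m T j) : False := by
  obtain ⟨hi1, hi2, x, hxinj, hxT, hS1⟩ := h1
  obtain ⟨hj1, hj2, x', hx'inj, hx'T, hS2⟩ := h2
  have E : ctreeOf m (swapAt x i) = ctreeOf m (swapAt x' j) := hS1.symm.trans hS2
  have hswx := swapAt_injOn hxinj hi1 hi2
  have hswx' := swapAt_injOn hx'inj hj1 hj2
  rcases Nat.lt_or_ge (i + 1) j with hfar | hnear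
  · -- j ≥ i + 2 : the single invariant anc _ i (i+1) flips on one side only
    have B1 := anc_succ_iff hswx hi1 hi2
    rw [swapAt_self, swapAt_succ] at B1
    have B2 := anc_succ_iff hswx' hi1 hi2
    rw [swapAt_other x' j i (by omega) (by omega),
        swapAt_other x' j (i + 1) (by omega) (by omega), ← E] at B2
    have B3 := anc_succ_iff hxinj hi1 hi2
    rw [hxT] at B3
    have B4 := anc_succ_iff hx'inj hi1 hi2
    rw [hx'T] at B4
    have k1 : x (i + 1) < x i ↔ x' i < x' (i + 1) := B1.symm.trans B2
    have k2 : x i < x (i + 1) ↔ x' i < x' (i + 1) := B3.symm.trans B4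
    have hne := injOn_ne hxinj (a := i) (b := i + 1) (by omega) (by omega) (by omega) hi2 (by omega)
    omega
  · -- j = i + 1 : use the three invariants on positions i, i+1, i+2
    have hj : j = i + 1 := by omega
    subst hj
    have hm : i + 2 ≤ m := by omega
    have e12 : i + 1 + 1 = i + 2 := by omega
    -- T-level invariants
    have t1 := anc_succ_iff hxinj hi1 hi2
    rw [hxT] at t1
    have t1' := anc_succ_iff hx'inj hi1 hi2
    rw [hx'T] at t1'
    have e1 : x i < x (i + 1) ↔ x' i < x' (i + 1) := t1.symm.trans t1'
    have t2 := anc_succ_iff hxinj (i := i + 1) (by omega) (by omega)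
    rw [hxT, e12] at t2
    have t2' := anc_succ_iff hx'inj (i := i + 1) (by omega) (by omega)
    rw [hx'T, e12] at t2'
    have e2 : x (i + 1) < x (i + 2) ↔ x' (i + 1) < x' (i + 2) := t2.symm.trans t2'
    have t3 := anc_two_iff hxinj hi1 hm
    rw [hxT] at t3
    have t3' := anc_two_iff hx'inj hi1 hm
    rw [hx'T] at t3'
    have e3 : (x i < x (i + 1) ∧ x i < x (i + 2)) ↔ (x' i < x' (i + 1) ∧ x' i < x' (i + 2)) :=
      t3.symm.trans t3'
    -- S-level invariants
    have s1 := anc_succ_iff hswx hi1 hi2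
    rw [swapAt_self, swapAt_succ] at s1
    have s1' := anc_succ_iff hswx' hi1 hi2
    rw [swapAt_other x' (i + 1) i (by omega) (by omega), swapAt_self, e12, ← E] at s1'
    have f1 : x (i + 1) < x i ↔ x' i < x' (i + 2) := s1.symm.trans s1'
    have s2 := anc_succ_iff hswx (i := i + 1) (by omega) (by omega)
    rw [swapAt_succ, e12, swapAt_other x i (i + 2) (by omega) (by omega)] at s2
    have s2' := anc_succ_iff hswx' (i := i + 1) (by omega) (by omega)
    rw [swapAt_self, e12, swapAt_succ, ← E] at s2'
    have f2 : x i < x (i + 2) ↔ x' (i + 2) < x' (i + 1) := s2.symm.trans s2'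
    have s3 := anc_two_iff hswx hi1 hm
    rw [swapAt_self, swapAt_succ, swapAt_other x i (i + 2) (by omega) (by omega)] at s3
    have s3' := anc_two_iff hswx' hi1 hm
    rw [swapAt_other x' (i + 1) i (by omega) (by omega), swapAt_self, e12,
        swapAt_succ, ← E] at s3'
    have f3 : (x (i + 1) < x i ∧ x (i + 1) < x (i + 2)) ↔
        (x' i < x' (i + 2) ∧ x' i < x' (i + 1)) := s3.symm.trans s3'
    -- distinctness
    have n1 := injOn_ne hxinj (a := i) (b := i + 1) (by omega) (by omega) (by omega) (by omega) (by omega)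
    have n2 := injOn_ne hxinj (a := i) (b := i + 2) (by omega) (by omega) (by omega) (by omega) (by omega)
    have n3 := injOn_ne hxinj (a := i + 1) (b := i + 2) (by omega) (by omega) (by omega) (by omega) (by omega)
    have n4 := injOn_ne hx'inj (a := i) (b := i + 1) (by omega) (by omega) (by omega) (by omega) (by omega)
    have n5 := injOn_ne hx'inj (a := i) (b := i + 2) (by omega) (by omega) (by omega) (by omega) (by omega)
    have n6 := injOn_ne hx'inj (a := i + 1) (b := i + 2) (by omega) (by omega) (by omega) (by omega) (by omega)
    omega

end SwapProof

namespace SwapProof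

def combBase (sL sR : ℕ) (y z : ℕ → ℤ) : ℤ :=
  listMin ((seqList y 1 sL).map (fun v => 2 * v) ++ (seqList z 1 sR).map (fun v => 2 * v + 1)) - 1

/-- Glue two sequences around a new minimum. -/
def comb (sL sR : ℕ) (y z : ℕ → ℤ) : ℕ → ℤ := fun j =>
  if j ≤ sL then 2 * y j else if j = sL + 1 then combBase sL sR y z
  else 2 * z (j - (sL + 1)) + 1

lemma comb_eval_left {sL sR : ℕ} {y z : ℕ → ℤ} {j : ℕ} (h : j ≤ sL) :
    comb sL sR y z j = 2 * y j := by simp only [comb]; rw [if_pos h]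

lemma comb_eval_mid {sL sR : ℕ} {y z : ℕ → ℤ} :
    comb sL sR y z (sL + 1) = combBase sL sR y z := by
  simp only [comb]; rw [if_neg (by omega : ¬ (sL + 1 ≤ sL))]; simp

lemma comb_eval_right {sL sR : ℕ} {y z : ℕ → ℤ} {j : ℕ} (h : sL + 2 ≤ j) :
    comb sL sR y z j = 2 * z (j - (sL + 1)) + 1 := by
  simp only [comb]; rw [if_neg (by omega), if_neg (by omega)]

lemma comb_min {sL sR : ℕ} {y z : ℕ → ℤ} :
    ∀ j, 1 ≤ j → j ≤ sL + sR + 1 → j ≠ sL + 1 →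
      comb sL sR y z (sL + 1) < comb sL sR y z j := by
  intro j h1 h2 h3
  rw [comb_eval_mid]
  rcases Nat.lt_or_ge sL j with hj | hj
  · have hj2 : sL + 2 ≤ j := by omega
    rw [comb_eval_right hj2]
    have hmem : 2 * z (j - (sL + 1)) + 1 ∈
        (seqList y 1 sL).map (fun v => 2 * v) ++ (seqList z 1 sR).map (fun v => 2 * v + 1) := by
      apply List.mem_append_right
      apply List.mem_map_of_mem
      rw [mem_seqList]
      exact ⟨j - (sL + 1) - 1, by omega, by congr 1; omega⟩
    have := listMin_le hmem
    rw [combBase]; omega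
  · rw [comb_eval_left (by omega)]
    have hmem : 2 * y j ∈
        (seqList y 1 sL).map (fun v => 2 * v) ++ (seqList z 1 sR).map (fun v => 2 * v + 1) := by
      apply List.mem_append_left
      apply List.mem_map_of_mem
      rw [mem_seqList]
      exact ⟨j - 1, by omega, by congr 1; omega⟩
    have := listMin_le hmem
    rw [combBase]; omega

lemma comb_injOn {sL sR : ℕ} {y z : ℕ → ℤ} (hy : Set.InjOn y (Set.Icc 1 sL))
    (hz : Set.InjOn z (Set.Icc 1 sR)) :
    Set.InjOn (comb sL sR y z) (Set.Icc 1 (sL + sR + 1)) := by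
  intro a ha b hb hab
  simp only [Set.mem_Icc] at ha hb
  by_contra hne
  have ca : a ≤ sL ∨ a = sL + 1 ∨ sL + 2 ≤ a := by omega
  have cb : b ≤ sL ∨ b = sL + 1 ∨ sL + 2 ≤ b := by omega
  rcases ca with ha' | ha' | ha' <;> rcases cb with hb' | hb' | hb'
  · rw [comb_eval_left ha', comb_eval_left hb'] at hab
    have : y a = y b := by omega
    exact hne (hy (Set.mem_Icc.mpr ⟨ha.1, ha'⟩) (Set.mem_Icc.mpr ⟨hb.1, hb'⟩) this)
  · subst hb'
    have := comb_min (y := y) (z := z) (sR := sR) a ha.1 ha.2 (by omega)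
    omega
  · rw [comb_eval_left ha', comb_eval_right hb'] at hab; omega
  · subst ha'
    have := comb_min (y := y) (z := z) (sR := sR) b hb.1 hb.2 (by omega)
    omega
  · exact hne (ha'.trans hb'.symm)
  · subst ha'
    have := comb_min (y := y) (z := z) (sR := sR) b hb.1 hb.2 (by omega)
    omega
  · rw [comb_eval_right ha', comb_eval_left hb'] at hab; omega
  · subst hb'
    have := comb_min (y := y) (z := z) (sR := sR) a ha.1 ha.2 (by omega)
    omega
  · rw [comb_eval_right ha', comb_eval_right hb'] at hab
    have : z (a - (sL + 1)) = z (b - (sL + 1)) := by omega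
    have := hz (Set.mem_Icc.mpr ⟨by omega, by omega⟩) (Set.mem_Icc.mpr ⟨by omega, by omega⟩) this
    omega

lemma strictMono_double : StrictMono (fun v : ℤ => 2 * v) := fun a b h => by simp; omega

lemma strictMono_double' : StrictMono (fun v : ℤ => 2 * v + 1) := fun a b h => by simp; omega

lemma ctreeOf_double (n : ℕ) (y : ℕ → ℤ) : ctreeOf n (fun j => 2 * y j) = ctreeOf n y := by
  rw [ctreeOf, ctreeOf, seqList_map (fun v => 2 * v) y, ctreeL_map' strictMono_double]

lemma ctreeOf_double' (n : ℕ) (y : ℕ → ℤ) : ctreeOf n (fun j => 2 * y j + 1) = ctreeOf n y := by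
  rw [ctreeOf, ctreeOf, seqList_map (fun v => 2 * v + 1) y, ctreeL_map' strictMono_double']

lemma ctreeOf_congr {n : ℕ} {x y : ℕ → ℤ} (h : ∀ j, 1 ≤ j → j ≤ n → x j = y j) :
    ctreeOf n x = ctreeOf n y := by
  rw [ctreeOf, ctreeOf, seqList_congr h]

lemma comb_ctree {sL sR : ℕ} (y z : ℕ → ℤ) :
    ctreeOf (sL + sR + 1) (comb sL sR y z) = .node (ctreeOf sL y) (ctreeOf sR z) := by
  have h := ctreeOf_eq_node (m := sL + sR + 1) (k := sL + 1) (x := comb sL sR y z)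
    (by omega) (by omega) comb_min
  have e1 : sL + 1 - 1 = sL := by omega
  have e2 : sL + sR + 1 - (sL + 1) = sR := by omega
  rw [e1, e2] at h
  rw [h]
  congr 1
  · rw [ctreeOf_congr (fun j hj1 hj2 => comb_eval_left hj2), ctreeOf_double]
  · rw [ctreeOf_congr (y := fun j => 2 * z j + 1) ?_, ctreeOf_double']
    intro j hj1 hj2
    rw [comb_eval_right (by omega)]
    have e : j + (sL + 1) - (sL + 1) = j := by omega
    rw [e]

lemma exists_realizer : ∀ T : BTree, ∃ x : ℕ → ℤ,
    Set.InjOn x (Set.Icc 1 T.size) ∧ ctreeOf T.size x = T := by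
  intro T
  induction T with
  | nil =>
    refine ⟨fun _ => 0, ?_, rfl⟩
    have : Set.Icc (1:ℕ) 0 = ∅ := Set.Icc_eq_empty (by omega)
    rw [BTree.size, this]
    exact Set.injOn_empty _
  | node L R ihL ihR =>
    obtain ⟨y, hy, hyL⟩ := ihL
    obtain ⟨z, hz, hzR⟩ := ihR
    refine ⟨comb L.size R.size y z, ?_, ?_⟩
    · show Set.InjOn _ (Set.Icc 1 (BTree.size (.node L R)))
      have : BTree.size (.node L R) = L.size + R.size + 1 := rfl
      rw [this]
      exact comb_injOn hy hz
    · show ctreeOf (BTree.size (.node L R)) _ = _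
      have : BTree.size (.node L R) = L.size + R.size + 1 := rfl
      rw [this, comb_ctree, hyL, hzR]

end SwapProof

namespace SwapProof

lemma shift_injOn {x : ℕ → ℤ} {m s : ℕ} (hinj : Set.InjOn x (Set.Icc 1 m))
    (hs : s + 1 ≤ m) : Set.InjOn (fun j => x (j + s)) (Set.Icc 1 (m - s)) := by
  intro a ha b hb hab
  simp only [Set.mem_Icc] at ha hb
  have := hinj (Set.mem_Icc.mpr ⟨by omega, by omega⟩)
    (Set.mem_Icc.mpr ⟨by omega, by omega⟩) hab
  omega

lemma swap_min_at {x : ℕ → ℤ} {m k i : ℕ}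
    (hmin : ∀ j, 1 ≤ j → j ≤ m → j ≠ k → x k < x j)
    (h1 : 1 ≤ i) (h2 : i + 1 ≤ m) (h3 : i ≠ k) (h4 : i + 1 ≠ k) :
    ∀ j, 1 ≤ j → j ≤ m → j ≠ k → swapAt x i k < swapAt x i j := by
  intro j hj1 hj2 hj3
  rw [swapAt_other x i k (fun h => h3 h.symm) (fun h => h4 h.symm)]
  rcases eq_or_ne j i with heq | hji
  · rw [heq, swapAt_self]
    exact hmin (i + 1) (by omega) (by omega) h4
  · rcases eq_or_ne j (i + 1) with heq' | hji'
    · rw [heq', swapAt_succ]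
      exact hmin i (by omega) (by omega) h3
    · rw [swapAt_other x i j hji hji']
      exact hmin j hj1 hj2 hj3

lemma ngi_left {L R : BTree} {i : ℕ} (hi1 : 1 ≤ i) (hi2 : i + 1 ≤ L.size) :
    ngi (L.size + R.size + 1) (.node L R) i = (fun S => BTree.node S R) '' ngi L.size L i := by
  set sL := L.size with hsL
  set sR := R.size with hsR
  set m := sL + sR + 1 with hm
  ext S
  constructor
  · rintro ⟨_, him, x, hxinj, hxT, hSe⟩
    obtain ⟨hkm, hmin, hLx, hRx⟩ := ctree_node_inv hxinj hxT
    have e : m - (sL + 1) = sR := by omega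
    rw [← hsL] at hmin hLx hRx
    rw [e] at hRx
    have hmin2 := swap_min_at hmin hi1 (by omega) (by omega) (by omega)
    have hdec := ctreeOf_eq_node (m := m) (k := sL + 1) (by omega) (by omega) hmin2
    have e1 : sL + 1 - 1 = sL := by omega
    rw [e1, e] at hdec
    have hright : ctreeOf sR (fun j => swapAt x i (j + (sL + 1))) = R := by
      rw [ctreeOf_congr (y := fun j => x (j + (sL + 1)))
        (fun j hj1 hj2 => swapAt_other x i _ (by omega) (by omega))]
      exact hRx
    refine ⟨ctreeOf sL (swapAt x i),
      ⟨hi1, hi2, x, hxinj.mono (Set.Icc_subset_Icc_right (by omega)), hLx, rfl⟩, ?_⟩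
    rw [hSe, hdec, hright]
  · rintro ⟨S0, ⟨_, _, y, hyinj, hyL, hS0e⟩, rfl⟩
    obtain ⟨z, hzinj, hzR⟩ := exists_realizer R
    set x := comb sL sR y z with hx
    have hxinj : Set.InjOn x (Set.Icc 1 m) := comb_injOn hyinj hzinj
    have hxT : ctreeOf m x = .node L R := by
      rw [hx, comb_ctree, hyL, hzR]
    have hmin2 := swap_min_at (x := x) (m := m) (k := sL + 1)
      (fun j h1 h2 h3 => comb_min j h1 h2 h3) hi1 (by omega) (by omega) (by omega)
    have hdec := ctreeOf_eq_node (m := m) (k := sL + 1) (by omega) (by omega) hmin2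
    have e1 : sL + 1 - 1 = sL := by omega
    have e : m - (sL + 1) = sR := by omega
    rw [e1, e] at hdec
    have hleft : ctreeOf sL (swapAt x i) = S0 := by
      rw [ctreeOf_congr (y := fun j => 2 * swapAt y i j) ?_, ctreeOf_double, ← hS0e]
      intro j hj1 hj2
      show swapAt x i j = 2 * swapAt y i j
      rcases eq_or_ne j i with heq | hji
      · rw [heq, swapAt_self, swapAt_self, hx, comb_eval_left (by omega)]
      · rcases eq_or_ne j (i + 1) with heq' | hji'
        · rw [heq', swapAt_succ, swapAt_succ, hx, comb_eval_left (by omega)]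
        · rw [swapAt_other x i j hji hji', swapAt_other y i j hji hji', hx,
            comb_eval_left (by omega)]
    have hright : ctreeOf sR (fun j => swapAt x i (j + (sL + 1))) = R := by
      rw [ctreeOf_congr (y := fun j => 2 * z j + 1) ?_, ctreeOf_double']
      · exact hzR
      · intro j hj1 hj2
        show swapAt x i (j + (sL + 1)) = 2 * z j + 1
        rw [swapAt_other x i _ (by omega) (by omega), hx, comb_eval_right (by omega)]
        have e2 : j + (sL + 1) - (sL + 1) = j := by omega
        rw [e2]
    exact ⟨hi1, by omega, x, hxinj, hxT, by rw [hdec, hleft, hright]⟩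

lemma ngi_right {L R : BTree} {i : ℕ} (hi1 : 1 ≤ i) (hi2 : i + 1 ≤ R.size) :
    ngi (L.size + R.size + 1) (.node L R) (i + (L.size + 1)) =
      (fun S => BTree.node L S) '' ngi R.size R i := by
  set sL := L.size with hsL
  set sR := R.size with hsR
  set m := sL + sR + 1 with hm
  set p := i + (sL + 1) with hp
  ext S
  constructor
  · rintro ⟨_, hpm, x, hxinj, hxT, hSe⟩
    obtain ⟨hkm, hmin, hLx, hRx⟩ := ctree_node_inv hxinj hxT
    have e : m - (sL + 1) = sR := by omega
    rw [← hsL] at hmin hLx hRx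
    rw [e] at hRx
    have hmin2 := swap_min_at hmin (i := p) (by omega) (by omega) (by omega) (by omega)
    have hdec := ctreeOf_eq_node (m := m) (k := sL + 1) (by omega) (by omega) hmin2
    have e1 : sL + 1 - 1 = sL := by omega
    rw [e1, e] at hdec
    have hleft : ctreeOf sL (swapAt x p) = L := by
      rw [ctreeOf_congr (y := x) (fun j hj1 hj2 => swapAt_other x p j (by omega) (by omega))]
      exact hLx
    have hright : ctreeOf sR (fun j => swapAt x p (j + (sL + 1))) =
        ctreeOf sR (swapAt (fun j => x (j + (sL + 1))) i) := by
      apply ctreeOf_congr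
      intro j hj1 hj2
      show swapAt x p (j + (sL + 1)) = swapAt (fun j => x (j + (sL + 1))) i j
      rcases eq_or_ne j i with heq | hji
      · rw [heq]
        have e2 : i + (sL + 1) = p := rfl
        rw [e2, swapAt_self, swapAt_self]
        show x (p + 1) = x (i + 1 + (sL + 1))
        congr 1
        omega
      · rcases eq_or_ne j (i + 1) with heq' | hji'
        · rw [heq']
          have e2 : i + 1 + (sL + 1) = p + 1 := by omega
          rw [e2, swapAt_succ, swapAt_succ]
        · rw [swapAt_other x p _ (by omega) (by omega), swapAt_other _ i j hji hji']
    refine ⟨ctreeOf sR (swapAt (fun j => x (j + (sL + 1))) i),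
      ⟨hi1, hi2, (fun j => x (j + (sL + 1))), ?_, hRx, rfl⟩, ?_⟩
    · have := shift_injOn hxinj (s := sL + 1) (by omega)
      have e3 : m - (sL + 1) = sR := by omega
      rwa [e3] at this
    · rw [hSe, hdec, hleft, hright]
  · rintro ⟨S0, ⟨_, _, z, hzinj, hzR, hS0e⟩, rfl⟩
    obtain ⟨y, hyinj, hyL⟩ := exists_realizer L
    set x := comb sL sR y z with hx
    have hxinj : Set.InjOn x (Set.Icc 1 m) := comb_injOn hyinj hzinj
    have hxT : ctreeOf m x = .node L R := by
      rw [hx, comb_ctree, hyL, hzR]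
    have hmin2 := swap_min_at (x := x) (m := m) (k := sL + 1) (i := p)
      (fun j h1 h2 h3 => comb_min j h1 h2 h3) (by omega) (by omega) (by omega) (by omega)
    have hdec := ctreeOf_eq_node (m := m) (k := sL + 1) (by omega) (by omega) hmin2
    have e1 : sL + 1 - 1 = sL := by omega
    have e : m - (sL + 1) = sR := by omega
    rw [e1, e] at hdec
    have hleft : ctreeOf sL (swapAt x p) = L := by
      rw [ctreeOf_congr (y := fun j => 2 * y j) ?_, ctreeOf_double]
      · exact hyL
      · intro j hj1 hj2
        show swapAt x p j = 2 * y j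
        rw [swapAt_other x p j (by omega) (by omega), hx, comb_eval_left (by omega)]
    have hright : ctreeOf sR (fun j => swapAt x p (j + (sL + 1))) = S0 := by
      rw [ctreeOf_congr (y := fun j => 2 * swapAt z i j + 1) ?_, ctreeOf_double', ← hS0e]
      intro j hj1 hj2
      show swapAt x p (j + (sL + 1)) = 2 * swapAt z i j + 1
      rcases eq_or_ne j i with heq | hji
      · rw [heq]
        have e2 : i + (sL + 1) = p := rfl
        rw [e2, swapAt_self, swapAt_self, hx, comb_eval_right (by omega)]
        have e3 : p + 1 - (sL + 1) = i + 1 := by omega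
        rw [e3]
      · rcases eq_or_ne j (i + 1) with heq' | hji'
        · rw [heq']
          have e2 : i + 1 + (sL + 1) = p + 1 := by omega
          rw [e2, swapAt_succ, swapAt_succ, hx, comb_eval_right (by omega)]
          have e3 : p - (sL + 1) = i := by omega
          rw [e3]
        · rw [swapAt_other x p _ (by omega) (by omega), swapAt_other z i j hji hji', hx,
            comb_eval_right (by omega)]
          have e3 : j + (sL + 1) - (sL + 1) = j := by omega
          rw [e3]
    exact ⟨by omega, by omega, x, hxinj, hxT, by rw [hdec, hleft, hright]⟩

end SwapProof

namespace SwapProof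

lemma finite_size_le : ∀ n : ℕ, {T : BTree | T.size ≤ n}.Finite := by
  intro n
  induction n with
  | zero =>
    apply Set.Finite.subset (Set.finite_singleton BTree.nil)
    intro T hT
    simp only [Set.mem_setOf_eq] at hT
    cases T with
    | nil => rfl
    | node l r => simp [BTree.size] at hT
  | succ n ih =>
    apply Set.Finite.subset ((Set.Finite.image2 BTree.node ih ih).insert BTree.nil)
    intro T hT
    simp only [Set.mem_setOf_eq] at hT
    cases T with
    | nil => simp
    | node l r =>
      simp only [BTree.size] at hT
      right
      exact Set.mem_image2_of_mem (by simp only [Set.mem_setOf_eq]; omega)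
        (by simp only [Set.mem_setOf_eq]; omega)

lemma ngi_size {m : ℕ} {T S : BTree} {i : ℕ} (h : S ∈ ngi m T i) : S.size = m := by
  obtain ⟨_, _, x, _, _, rfl⟩ := h
  exact size_ctreeOf m _

lemma ngi_finite (m : ℕ) (T : BTree) (i : ℕ) : (ngi m T i).Finite :=
  (finite_size_le m).subset (fun S hS => by
    simp only [Set.mem_setOf_eq]
    exact le_of_eq (ngi_size hS))

lemma ng_finite (m : ℕ) (T : BTree) : (ng m T).Finite :=
  (finite_size_le m).subset (fun S hS => by
    simp only [Set.mem_setOf_eq]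
    rcases Set.mem_iUnion.mp hS with ⟨i, hi⟩
    exact le_of_eq (ngi_size hi))

theorem core (L R : BTree) :
    (ng (L.size + R.size + 1) (BTree.node L R)).ncard =
      (ng L.size L).ncard + (ng R.size R).ncard +
      (ngi (L.size + R.size + 1) (BTree.node L R) L.size).ncard +
      (ngi (L.size + R.size + 1) (BTree.node L R) (L.size + 1)).ncard := by
  set sL := L.size with hsL
  set sR := R.size with hsR
  set m := sL + sR + 1 with hm
  set T := BTree.node L R with hT
  set S1 := (fun S => BTree.node S R) '' ng sL L with hS1
  set S2 := (fun S => BTree.node L S) '' ng sR R with hS2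
  set S3 := ngi m T sL with hS3
  set S4 := ngi m T (sL + 1) with hS4
  -- membership characterizations
  have mem1 : ∀ S, S ∈ S1 ↔ ∃ i, 1 ≤ i ∧ i + 1 ≤ sL ∧ S ∈ ngi m T i := by
    intro S
    constructor
    · rintro ⟨S0, hS0, rfl⟩
      rcases Set.mem_iUnion.mp hS0 with ⟨i, hi⟩
      have h1 := hi.1
      have h2 := hi.2.1
      refine ⟨i, h1, h2, ?_⟩
      rw [hT, hm, hsL, hsR, ngi_left h1 h2]
      exact ⟨S0, hi, rfl⟩
    · rintro ⟨i, h1, h2, hS⟩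
      rw [hT, hm, hsL, hsR, ngi_left h1 h2] at hS
      rcases hS with ⟨S0, hS0, rfl⟩
      exact ⟨S0, Set.mem_iUnion.mpr ⟨i, hS0⟩, rfl⟩
  have mem2 : ∀ S, S ∈ S2 ↔ ∃ i, 1 ≤ i ∧ i + 1 ≤ sR ∧ S ∈ ngi m T (i + (sL + 1)) := by
    intro S
    constructor
    · rintro ⟨S0, hS0, rfl⟩
      rcases Set.mem_iUnion.mp hS0 with ⟨i, hi⟩
      have h1 := hi.1
      have h2 := hi.2.1
      refine ⟨i, h1, h2, ?_⟩
      rw [hT, hm, hsL, hsR, ngi_right h1 h2]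
      exact ⟨S0, hi, rfl⟩
    · rintro ⟨i, h1, h2, hS⟩
      rw [hT, hm, hsL, hsR, ngi_right h1 h2] at hS
      rcases hS with ⟨S0, hS0, rfl⟩
      exact ⟨S0, Set.mem_iUnion.mpr ⟨i, hS0⟩, rfl⟩
  -- the partition
  have hunion : ng m T = S1 ∪ S2 ∪ S3 ∪ S4 := by
    ext S
    constructor
    · intro hS
      rcases Set.mem_iUnion.mp hS with ⟨i, hi⟩
      have h1 := hi.1
      have h2 := hi.2.1
      rcases Nat.lt_or_ge i sL with hc | hc
      · exact Or.inl (Or.inl (Or.inl ((mem1 S).mpr ⟨i, h1, by omega, hi⟩)))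
      · rcases eq_or_ne i sL with rfl | hc2
        · exact Or.inl (Or.inr hi)
        · rcases eq_or_ne i (sL + 1) with rfl | hc3
          · exact Or.inr hi
          · have h4 : i = (i - (sL + 1)) + (sL + 1) := by omega
            rw [h4] at hi
            exact Or.inl (Or.inl (Or.inr ((mem2 S).mpr
              ⟨i - (sL + 1), by omega, by omega, hi⟩)))
    · intro hS
      rcases hS with ((h | h) | h) | h
      · rcases (mem1 S).mp h with ⟨i, -, -, hS⟩
        exact Set.mem_iUnion.mpr ⟨i, hS⟩
      · rcases (mem2 S).mp h with ⟨i, -, -, hS⟩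
        exact Set.mem_iUnion.mpr ⟨i + (sL + 1), hS⟩
      · exact Set.mem_iUnion.mpr ⟨sL, h⟩
      · exact Set.mem_iUnion.mpr ⟨sL + 1, h⟩
  -- disjointness
  have d12 : Disjoint S1 S2 := by
    rw [Set.disjoint_left]
    intro S h1 h2
    rcases (mem1 S).mp h1 with ⟨i, hi1, hi2, hSi⟩
    rcases (mem2 S).mp h2 with ⟨j, hj1, hj2, hSj⟩
    exact ngi_not_mem_both (i := i) (j := j + (sL + 1)) (by omega) hSi hSj
  have d13 : Disjoint S1 S3 := by
    rw [Set.disjoint_left]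
    intro S h1 h2
    rcases (mem1 S).mp h1 with ⟨i, hi1, hi2, hSi⟩
    exact ngi_not_mem_both (i := i) (j := sL) (by omega) hSi h2
  have d14 : Disjoint S1 S4 := by
    rw [Set.disjoint_left]
    intro S h1 h2
    rcases (mem1 S).mp h1 with ⟨i, hi1, hi2, hSi⟩
    exact ngi_not_mem_both (i := i) (j := sL + 1) (by omega) hSi h2
  have d23 : Disjoint S2 S3 := by
    rw [Set.disjoint_left]
    intro S h1 h2
    rcases (mem2 S).mp h1 with ⟨i, hi1, hi2, hSi⟩
    exact ngi_not_mem_both (i := sL) (j := i + (sL + 1)) (by omega) h2 hSi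
  have d24 : Disjoint S2 S4 := by
    rw [Set.disjoint_left]
    intro S h1 h2
    rcases (mem2 S).mp h1 with ⟨i, hi1, hi2, hSi⟩
    exact ngi_not_mem_both (i := sL + 1) (j := i + (sL + 1)) (by omega) h2 hSi
  have d34 : Disjoint S3 S4 := by
    rw [Set.disjoint_left]
    intro S h1 h2
    exact ngi_not_mem_both (i := sL) (j := sL + 1) (by omega) h1 h2
  -- finiteness
  have f1 : S1.Finite := (ng_finite sL L).image _
  have f2 : S2.Finite := (ng_finite sR R).image _
  have f3 : S3.Finite := ngi_finite m T sL
  have f4 : S4.Finite := ngi_finite m T (sL + 1)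
  -- count
  rw [hunion]
  rw [Set.ncard_union_eq (by
      refine Set.disjoint_union_left.mpr ⟨Set.disjoint_union_left.mpr ⟨d14, d24⟩, d34⟩)
    ((f1.union f2).union f3) f4]
  rw [Set.ncard_union_eq (Set.disjoint_union_left.mpr ⟨d13, d23⟩) (f1.union f2) f3]
  rw [Set.ncard_union_eq d12 f1 f2]
  have c1 : S1.ncard = (ng sL L).ncard :=
    Set.ncard_image_of_injective _ (fun a b h => by injection h)
  have c2 : S2.ncard = (ng sR R).ncard :=
    Set.ncard_image_of_injective _ (fun a b h => by injection h)
  rw [c1, c2]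

end SwapProof


theorem stmt8 (m k : ℕ) (L R : BTree)
    (hsize : (BTree.node L R).size = m) (hL : L.size = k - 1) (hR : R.size = m - k) :
    (ng m (BTree.node L R)).ncard =
      (ng (k - 1) L).ncard + (ng (m - k) R).ncard +
      (ngi m (BTree.node L R) (k - 1)).ncard + (ngi m (BTree.node L R) k).ncard := by
  have hs : L.size + R.size + 1 = m := by
    have : (BTree.node L R).size = L.size + R.size + 1 := rfl
    omega
  have e1 : k - 1 = L.size := by omega
  have e2 : m - k = R.size := by omega
  have e4 : k = L.size + 1 := by omega
  have e3 : m = L.size + R.size + 1 := by omega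
  rw [e1, e2, e4, e3]
  exact SwapProof.core L R
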